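/- Let n : ℕ and let E : V_n → V_n → Prop be the edge relation of a succinctly represented directed graph on vertex set V_n. Then there exists a function g : V_n → V_n satisfying (H1) for all a, b ∈ V_n, a ≠ b → g a ≠ g b, and (H2) for all a, b ∈ V_n with b = a + 1, E (g a) (g b), if and only if the directed graph (V_n, E) has a Hamiltonian cycle, i.e., there is a list ℓ of vertices that contains every element of V_n exactly once, such that E holds between every two consecutive entries of ℓ and also from the last entry of ℓ to its first entry. -/

import Mathlib

/-- `num v` is the number encoded by the boolean vector `v`. -/
def num {n : ℕ} (v : Fin n → Bool) : ℕ :=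
  ∑ i : Fin n, 2 ^ (i : ℕ) * (if v i then 1 else 0)

/-- decode a natural number into a boolean vector -/
def vec (n : ℕ) (m : ℕ) : Fin n → Bool := fun i => m.testBit i

lemma num_succ {n : ℕ} (v : Fin (n + 1) → Bool) :
    num v = (if v 0 then 1 else 0) + 2 * num (fun i : Fin n => v i.succ) := by
  unfold num
  rw [Fin.sum_univ_succ, Finset.mul_sum]
  congr 1
  · simp
  · apply Finset.sum_congr rfl
    intro i _
    rw [Fin.val_succ, pow_succ]
    ring

lemma num_lt {n : ℕ} (v : Fin n → Bool) : num v < 2 ^ n := by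
  induction n with
  | zero => simp [num]
  | succ n ih =>
    rw [num_succ]
    have := ih (fun i : Fin n => v i.succ)
    have h2 : (if v 0 then 1 else 0) ≤ 1 := by split <;> omega
    rw [pow_succ]
    omega

lemma testBit_num {n : ℕ} (v : Fin n → Bool) (k : ℕ) :
    (num v).testBit k = if h : k < n then v ⟨k, h⟩ else false := by
  induction n generalizing k with
  | zero =>
    have : num v = 0 := by simp [num]
    simp [this]
  | succ n ih =>
    rw [num_succ]
    match k with
    | 0 =>
      rw [Nat.testBit_zero]
      have : ((if v 0 then 1 else 0) + 2 * num fun i : Fin n => v i.succ) % 2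
          = (if v 0 then 1 else 0) % 2 := by omega
      simp only [this]
      cases h : v 0 <;> simp [h]
    | k + 1 =>
      rw [Nat.testBit_add_one]
      have h2 : (if v 0 then 1 else 0) ≤ 1 := by split <;> omega
      have : ((if v 0 then 1 else 0) + 2 * num fun i : Fin n => v i.succ) / 2
          = num fun i : Fin n => v i.succ := by omega
      rw [this, ih]
      by_cases h : k < n
      · simp only [dif_pos h, dif_pos (Nat.succ_lt_succ h)]
        congr 1
      · rw [dif_neg h, dif_neg (by omega)]

lemma num_vec {n m : ℕ} (h : m < 2 ^ n) : num (vec n m) = m := by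
  apply Nat.eq_of_testBit_eq
  intro i
  rw [testBit_num]
  by_cases hi : i < n
  · simp [vec, hi]
  · rw [dif_neg hi]
    exact (Nat.testBit_eq_false_of_lt (lt_of_lt_of_le h
      (Nat.pow_le_pow_right (by omega) (by omega)))).symm

lemma vec_num {n : ℕ} (v : Fin n → Bool) : vec n (num v) = v := by
  funext i
  have := testBit_num v i
  simp [vec, this, i.isLt]

theorem stmt_0 (n : ℕ) (E : (Fin n → Bool) → (Fin n → Bool) → Prop) :
    (∃ g : (Fin n → Bool) → (Fin n → Bool),
        (∀ a b : Fin n → Bool, a ≠ b → g a ≠ g b) ∧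
        (∀ a b : Fin n → Bool, num b = (num a + 1) % 2 ^ n → E (g a) (g b)))
      ↔
    (∃ ℓ : List (Fin n → Bool),
        (∀ v : Fin n → Bool, ℓ.count v = 1) ∧
        ℓ.Chain' E ∧
        ∀ (h : ℓ ≠ []), E (ℓ.getLast h) (ℓ.head h)) := by
  have hpos : 0 < 2 ^ n := Nat.pow_pos (by omega)
  constructor
  · rintro ⟨g, hinj, hE⟩
    have ginj : Function.Injective g := by
      intro a b h
      by_contra hab
      exact hinj a b hab h
    have gsurj : Function.Surjective g := Finite.surjective_of_injective ginj
    refine ⟨(List.range (2 ^ n)).map (fun m => g (vec n m)), ?_, ?_, ?_⟩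
    · intro v
      have hnd : ((List.range (2 ^ n)).map (fun m => g (vec n m))).Nodup := by
        apply List.Nodup.map_on _ List.nodup_range
        intro x hx y hy hxy
        rw [List.mem_range] at hx hy
        have := ginj hxy
        have hx' := num_vec (n := n) hx
        have hy' := num_vec (n := n) hy
        rw [← hx', ← hy', this]
      apply List.count_eq_one_of_mem hnd
      obtain ⟨w, hw⟩ := gsurj v
      rw [List.mem_map]
      exact ⟨num w, List.mem_range.mpr (num_lt w), by rw [vec_num, hw]⟩
    · rw [show List.Chain' E _ = List.IsChain E _ from rfl, List.isChain_iff_getElem]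
      intro i h
      simp only [List.length_map, List.length_range] at h
      simp only [List.get_eq_getElem, List.getElem_map, List.getElem_range]
      apply hE
      rw [num_vec (by omega), num_vec (by omega), Nat.mod_eq_of_lt (by omega)]
    · intro h
      rw [List.getLast_eq_getElem, List.head_eq_getElem_zero h]
      simp only [List.get_eq_getElem, List.length_map, List.length_range,
        List.getElem_map, List.getElem_range]
      apply hE
      have h1 : num (vec n (2 ^ n - 1)) = 2 ^ n - 1 := num_vec (by omega)
      have h0 : num (vec n 0) = 0 := num_vec hpos
      have h2 : 2 ^ n - 1 + 1 = 2 ^ n := by omega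
      simp only [h0, h1, h2, Nat.mod_self]
  · rintro ⟨ℓ, hcount, hchain, hcyc⟩
    have hnd : ℓ.Nodup := List.nodup_iff_count_eq_one.mpr (fun a _ => hcount a)
    have hmem : ∀ v : Fin n → Bool, v ∈ ℓ := by
      intro v
      rw [← List.count_pos_iff]
      rw [hcount v]; omega
    have hlen : ℓ.length = 2 ^ n := by
      have h1 : ℓ.toFinset = Finset.univ := by
        apply Finset.eq_univ_of_forall
        intro v; rw [List.mem_toFinset]; exact hmem v
      have h2 := List.toFinset_card_of_nodup hnd
      rw [h1] at h2
      rw [← h2]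
      simp [Fintype.card_fun]
    have hne : ℓ ≠ [] := by
      intro h; rw [h] at hlen; simp at hlen; omega
    refine ⟨fun a => ℓ.get ⟨num a, by rw [hlen]; exact num_lt a⟩, ?_, ?_⟩
    · intro a b hab hg
      apply hab
      have := List.nodup_iff_injective_get.mp hnd hg
      have h2 : num a = num b := by
        simpa using congrArg Fin.val this
      rw [← vec_num a, ← vec_num b, h2]
    · intro a b hb
      by_cases h : num a + 1 < 2 ^ n
      · rw [Nat.mod_eq_of_lt h] at hb
        have := List.isChain_iff_getElem.mp hchain (num a) (by rw [hlen]; omega)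
        convert this using 2
        all_goals simp [List.get_eq_getElem, hb]
      · have ha := num_lt a
        have ha' : num a = 2 ^ n - 1 := by omega
        have hb' : num b = 0 := by
          rw [hb, ha']
          have : 2 ^ n - 1 + 1 = 2 ^ n := by omega
          rw [this, Nat.mod_self]
        have := hcyc hne
        rw [List.getLast_eq_getElem, List.head_eq_getElem_zero hne] at this
        convert this using 2
        · simp [ha', hlen]
        · simp [hb']
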